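/- Let A ∈ ℝ^{n×n} be symmetric positive definite, G ∈ ℝ^{m×m} symmetric positive semidefinite with ‖G‖ ≤ 1, E ∈ ℝ^{m×n} surjective, and c > 0. Then the block matrix [[A + cE^T(I−G)E, ((I−G)E)^T], [(I−G)E, −c^{-1}G]] is nonsingular. -/

import Mathlib

open Matrix

/-- Auxiliary: `u ⬝ᵥ Mᵀ *ᵥ v = (M *ᵥ u) ⬝ᵥ v`. -/
private lemma dot_transpose_mulVec {m n : ℕ} (M : Matrix (Fin m) (Fin n) ℝ)
    (u : Fin n → ℝ) (v : Fin m → ℝ) :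
    u ⬝ᵥ (Mᵀ *ᵥ v) = (M *ᵥ u) ⬝ᵥ v := by
  rw [dotProduct_mulVec, vecMul_transpose, dotProduct_comm]

/-- Auxiliary: if `G` is symmetric PSD with operator norm at most one (as stated via
`toEuclideanLin`), then `1 - G` is positive semidefinite. -/
private lemma one_sub_posSemidef {m : ℕ} (G : Matrix (Fin m) (Fin m) ℝ)
    (hG : G.PosSemidef)
    (hGnorm : ∀ v : EuclideanSpace ℝ (Fin m), ‖Matrix.toEuclideanLin G v‖ ≤ ‖v‖) :
    (1 - G).PosSemidef := by
  rw [Matrix.posSemidef_iff_dotProduct_mulVec]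
  constructor
  · exact Matrix.isHermitian_one.sub hG.1
  · intro y
    have key : y ⬝ᵥ (G *ᵥ y) ≤ y ⬝ᵥ y := by
      set Y : EuclideanSpace ℝ (Fin m) := (WithLp.equiv 2 (Fin m → ℝ)).symm y with hY
      have h1 : y ⬝ᵥ (G *ᵥ y) = inner ℝ Y (Matrix.toEuclideanLin G Y) := by
        rw [hY, WithLp.equiv_symm_apply, Matrix.toEuclideanLin_apply_piLp_toLp]
        simp [PiLp.inner_apply, dotProduct, mul_comm]
      have h2 : y ⬝ᵥ y = inner ℝ Y Y := by
        rw [hY, WithLp.equiv_symm_apply, PiLp.inner_apply]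
        simp [dotProduct, mul_comm, sq]
      rw [h1, h2]
      calc inner ℝ Y (Matrix.toEuclideanLin G Y)
          ≤ ‖Y‖ * ‖Matrix.toEuclideanLin G Y‖ := real_inner_le_norm _ _
        _ ≤ ‖Y‖ * ‖Y‖ := by
            exact mul_le_mul_of_nonneg_left (hGnorm Y) (norm_nonneg _)
        _ = inner ℝ Y Y := (real_inner_self_eq_norm_mul_norm Y).symm
    have : star y ⬝ᵥ ((1 - G) *ᵥ y) = y ⬝ᵥ y - y ⬝ᵥ (G *ᵥ y) := by
      simp [sub_mulVec, dotProduct_sub, star_trivial]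
    rw [this]
    linarith

theorem newton_matrix_nonsingular (n m : ℕ)
    (A : Matrix (Fin n) (Fin n) ℝ) (hA : A.PosDef)
    (G : Matrix (Fin m) (Fin m) ℝ) (hG : G.PosSemidef)
    (hGnorm : ∀ v : EuclideanSpace ℝ (Fin m), ‖Matrix.toEuclideanLin G v‖ ≤ ‖v‖)
    (E : Matrix (Fin m) (Fin n) ℝ) (hE : Function.Surjective E.mulVec)
    (c : ℝ) (hc : 0 < c) :
    (Matrix.fromBlocks
        (A + c • (Eᵀ * (1 - G) * E)) (((1 - G) * E)ᵀ)
        ((1 - G) * E) (-(c⁻¹ • G))).det ≠ 0 := by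
  rw [Ne, ← Matrix.exists_mulVec_eq_zero_iff]
  rintro ⟨x, hx, hx0⟩
  apply hx
  set u : Fin n → ℝ := x ∘ Sum.inl with hu
  set v : Fin m → ℝ := x ∘ Sum.inr with hv
  have hxe : x = Sum.elim u v := by
    funext i; cases i <;> rfl
  rw [hxe, Matrix.fromBlocks_mulVec] at hx0
  have h1 : (A + c • (Eᵀ * (1 - G) * E)) *ᵥ u + ((1 - G) * E)ᵀ *ᵥ v = 0 := by
    funext i; simpa using congrFun hx0 (Sum.inl i)
  have h2 : ((1 - G) * E) *ᵥ u + (-(c⁻¹ • G)) *ᵥ v = 0 := by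
    funext i; simpa using congrFun hx0 (Sum.inr i)
  have hIG : (1 - G).PosSemidef := one_sub_posSemidef G hG hGnorm
  -- from h2 : ((1-G)*E) *ᵥ u = c⁻¹ • (G *ᵥ v)
  have h2' : ((1 - G) * E) *ᵥ u = c⁻¹ • (G *ᵥ v) := by
    have := h2
    rw [Matrix.neg_mulVec, Matrix.smul_mulVec, add_neg_eq_zero] at this
    exact this
  -- scalar identity from h1
  have s1 : u ⬝ᵥ (A *ᵥ u) + c * ((E *ᵥ u) ⬝ᵥ ((1 - G) *ᵥ (E *ᵥ u)))
      + c⁻¹ * (v ⬝ᵥ (G *ᵥ v)) = 0 := by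
    have huh1 : u ⬝ᵥ ((A + c • (Eᵀ * (1 - G) * E)) *ᵥ u + ((1 - G) * E)ᵀ *ᵥ v) = 0 := by
      rw [h1]; simp
    have e1 : u ⬝ᵥ ((Eᵀ * (1 - G) * E) *ᵥ u) = (E *ᵥ u) ⬝ᵥ ((1 - G) *ᵥ (E *ᵥ u)) := by
      rw [Matrix.mul_assoc, ← Matrix.mulVec_mulVec, dot_transpose_mulVec,
        ← Matrix.mulVec_mulVec]
    have e2 : u ⬝ᵥ (((1 - G) * E)ᵀ *ᵥ v) = c⁻¹ * (v ⬝ᵥ (G *ᵥ v)) := by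
      rw [dot_transpose_mulVec, h2']
      simp [smul_dotProduct, dotProduct_comm]
    rw [Matrix.add_mulVec, dotProduct_add, dotProduct_add, Matrix.smul_mulVec,
      dotProduct_smul, smul_eq_mul, e1, e2] at huh1
    linarith
  -- nonnegativity of the pieces
  have t1 : 0 ≤ (E *ᵥ u) ⬝ᵥ ((1 - G) *ᵥ (E *ᵥ u)) := by
    simpa [star_trivial] using (Matrix.posSemidef_iff_dotProduct_mulVec.mp hIG).2 (E *ᵥ u)
  have t2 : 0 ≤ v ⬝ᵥ (G *ᵥ v) := by
    simpa [star_trivial] using (Matrix.posSemidef_iff_dotProduct_mulVec.mp hG).2 v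
  have hu0 : u = 0 := by
    by_contra huz
    have := (Matrix.posDef_iff_dotProduct_mulVec.mp hA).2 huz
    rw [star_trivial] at this
    nlinarith [mul_nonneg hc.le t1, mul_nonneg (inv_pos.mpr hc).le t2]
  -- now G *ᵥ v = 0
  have hGv : G *ᵥ v = 0 := by
    have := h2'
    rw [hu0, Matrix.mulVec_zero] at this
    have hcne : (c : ℝ)⁻¹ ≠ 0 := inv_ne_zero hc.ne'
    funext i
    have := congrFun this i
    simp only [Pi.zero_apply, Pi.smul_apply, smul_eq_mul] at this
    have := this.symm
    field_simp at this
    simpa [this]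
  -- from h1 with u = 0 : Eᵀ *ᵥ v = 0
  have hEv : Eᵀ *ᵥ v = 0 := by
    have := h1
    rw [hu0, Matrix.mulVec_zero, zero_add] at this
    have hT : ((1 - G) * E)ᵀ *ᵥ v = Eᵀ *ᵥ ((1 - G)ᵀ *ᵥ v) := by
      rw [Matrix.transpose_mul, ← Matrix.mulVec_mulVec]
    have hGT : (1 - G)ᵀ = 1 - G := by
      rw [Matrix.transpose_sub, Matrix.transpose_one]
      congr 1
      ext i j
      simpa using (congrFun (congrFun hG.1 j) i).symm
    rw [hT, hGT, Matrix.sub_mulVec, Matrix.one_mulVec, hGv, sub_zero] at this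
    exact this
  -- surjectivity kills v
  have hv0 : v = 0 := by
    obtain ⟨w, hw⟩ := hE v
    have : v ⬝ᵥ v = 0 := by
      calc v ⬝ᵥ v = (E *ᵥ w) ⬝ᵥ v := by rw [hw]
        _ = w ⬝ᵥ (Eᵀ *ᵥ v) := (dot_transpose_mulVec E w v).symm
        _ = 0 := by rw [hEv]; simp
    exact dotProduct_self_eq_zero.mp this
  rw [hxe, hu0, hv0]
  funext i; cases i <;> rfl
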